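/- Let X₁,…,Xₙ be independent random variables taking values in a measurable space S and let X'₁,…,X'ₙ be an independent copy. Let h : S × S → ℝᵈ be a symmetric and non-negative measurable kernel (h(x₁,x₂) = h(x₂,x₁) and h(x₁,x₂) ≥ 0 for all x₁,x₂). Then E[max_{1≤m≤d} max_{1≤i≠j≤n} h_m(Xᵢ, X'ⱼ)] ≤ 4 E[max_{1≤m≤d} max_{1≤i≠j≤n} h_m(Xᵢ, Xⱼ)]. -/

import Mathlib

open MeasureTheory ProbabilityTheory Finset

lemma aux_sup4_le {d n : ℕ} {g : Fin d → Fin n → Fin n → ℝ} {P : Fin n → Fin n → Prop} {a : ℝ}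
    (ha : 0 ≤ a) (hg : ∀ m i j, P i j → g m i j ≤ a) :
    (⨆ m, ⨆ i, ⨆ j, ⨆ _ : P i j, g m i j) ≤ a :=
  Real.iSup_le (fun m => Real.iSup_le (fun i => Real.iSup_le (fun j =>
    Real.iSup_le (fun hp => hg m i j hp) ha) ha) ha) ha

lemma aux_le_sup4 {d n : ℕ} {g : Fin d → Fin n → Fin n → ℝ} {P : Fin n → Fin n → Prop}
    (m : Fin d) (i j : Fin n) (hp : P i j) :
    g m i j ≤ ⨆ m, ⨆ i, ⨆ j, ⨆ _ : P i j, g m i j := by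
  calc g m i j = ⨆ _ : P i j, g m i j := (ciSup_pos (f := fun _ => g m i j) hp).symm
    _ ≤ ⨆ j', ⨆ _ : P i j', g m i j' :=
        le_ciSup (f := fun j' => ⨆ _ : P i j', g m i j')
          (Set.Finite.bddAbove (Set.finite_range _)) j
    _ ≤ ⨆ i', ⨆ j', ⨆ _ : P i' j', g m i' j' :=
        le_ciSup (f := fun i' => ⨆ j', ⨆ _ : P i' j', g m i' j')
          (Set.Finite.bddAbove (Set.finite_range _)) i
    _ ≤ ⨆ m', ⨆ i', ⨆ j', ⨆ _ : P i' j', g m' i' j' :=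
        le_ciSup (f := fun m' => ⨆ i', ⨆ j', ⨆ _ : P i' j', g m' i' j')
          (Set.Finite.bddAbove (Set.finite_range _)) m

lemma aux_sup4_nonneg {d n : ℕ} {g : Fin d → Fin n → Fin n → ℝ} {P : Fin n → Fin n → Prop}
    (hg : ∀ m i j, 0 ≤ g m i j) :
    0 ≤ ⨆ m, ⨆ i, ⨆ j, ⨆ _ : P i j, g m i j :=
  Real.iSup_nonneg fun m => Real.iSup_nonneg fun i => Real.iSup_nonneg fun j =>
    Real.iSup_nonneg fun _ => hg m i j
lemma aux_card {n : ℕ} (i j : Fin n) (hij : i ≠ j) :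
    (Finset.univ.filter fun T : Finset (Fin n) => i ∉ T ∧ j ∈ T).card = 2 ^ (n - 2) := by
  classical
  have hcard : (Finset.univ.filter fun T : Finset (Fin n) => i ∉ T ∧ j ∈ T).card
      = ((Finset.univ.erase i).erase j).powerset.card := by
    refine Finset.card_bij' (fun T _ => T.erase j) (fun S _ => insert j S) ?_ ?_ ?_ ?_
    · intro T hT
      simp only [mem_filter, mem_univ, true_and] at hT
      simp only [mem_powerset]
      intro x hx
      rw [Finset.mem_erase] at hx ⊢
      refine ⟨hx.1, Finset.mem_erase.2 ⟨?_, Finset.mem_univ x⟩⟩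
      rintro rfl; exact hT.1 hx.2
    · intro S hS
      simp only [mem_powerset] at hS
      simp only [mem_filter, mem_univ, true_and]
      refine ⟨?_, Finset.mem_insert_self _ _⟩
      intro hi
      rcases Finset.mem_insert.1 hi with h | h
      · exact hij h
      · exact (Finset.mem_erase.1 (Finset.mem_erase.1 (hS h)).2).1 rfl
    · intro T hT
      simp only [mem_filter, mem_univ, true_and] at hT
      exact Finset.insert_erase hT.2
    · intro S hS
      simp only [mem_powerset] at hS
      exact Finset.erase_insert (fun hj' => (Finset.mem_erase.1 (hS hj')).1 rfl)
  rw [hcard, Finset.card_powerset, Finset.card_erase_of_mem, Finset.card_erase_of_mem,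
    Finset.card_univ, Fintype.card_fin, Nat.sub_sub]
  · exact Finset.mem_univ i
  · exact Finset.mem_erase.2 ⟨hij.symm, Finset.mem_univ j⟩

lemma aux_map_pi {Ω S : Type*} [MeasureSpace Ω] [IsProbabilityMeasure (ℙ : Measure Ω)]
    [MeasurableSpace S] {n : ℕ}
    (Z : (Fin n ⊕ Fin n) → Ω → S) (hmeas : ∀ i, Measurable (Z i))
    (hindep : iIndepFun Z ℙ)
    (hident : ∀ i : Fin n, IdentDistrib (Z (.inl i)) (Z (.inr i)) ℙ ℙ)
    (T : Finset (Fin n)) :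
    Measure.map (fun ω (i : Fin n) => Z (if i ∈ T then Sum.inr i else Sum.inl i) ω) ℙ
      = Measure.pi (fun i => Measure.map (Z (Sum.inl i)) ℙ) := by
  classical
  haveI : ∀ i : Fin n, IsProbabilityMeasure (Measure.map (Z (Sum.inl i)) ℙ) :=
    fun i => Measure.isProbabilityMeasure_map (hmeas _).aemeasurable
  refine (Measure.pi_eq fun s hs => ?_).symm
  have hVmeas : Measurable (fun ω (i : Fin n) => Z (if i ∈ T then Sum.inr i else Sum.inl i) ω) :=
    measurable_pi_lambda _ fun i => hmeas _
  rw [Measure.map_apply hVmeas (MeasurableSet.univ_pi hs)]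
  set s' : Fin n ⊕ Fin n → Set S := Sum.elim (fun i => if i ∈ T then Set.univ else s i)
      (fun i => if i ∈ T then s i else Set.univ) with hs'
  have hs'meas : ∀ k, MeasurableSet (s' k) := by
    rintro (i | i) <;> dsimp [s'] <;> split_ifs <;>
      first | exact MeasurableSet.univ | exact hs i
  have hpre : (fun ω (i : Fin n) => Z (if i ∈ T then Sum.inr i else Sum.inl i) ω) ⁻¹'
      Set.pi Set.univ s = ⋂ k, Z k ⁻¹' s' k := by
    ext ω
    simp only [Set.mem_preimage, Set.mem_pi, Set.mem_univ, true_implies, Set.mem_iInter,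
      Sum.forall]
    constructor
    · intro hh
      constructor
      · intro i; by_cases hi : i ∈ T
        · simp [s', hi]
        · have := hh i; rw [if_neg hi] at this; simpa [s', hi] using this
      · intro i; by_cases hi : i ∈ T
        · have := hh i; rw [if_pos hi] at this; simpa [s', hi] using this
        · simp [s', hi]
    · rintro ⟨h1, h2⟩ i
      by_cases hi : i ∈ T
      · have := h2 i; rw [if_pos hi]; simpa [s', hi] using this
      · have := h1 i; rw [if_neg hi]; simpa [s', hi] using this
  rw [hpre, hindep.meas_iInter (fun k => ⟨s' k, hs'meas k, rfl⟩)]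
  rw [Fintype.prod_sum_type, ← Finset.prod_mul_distrib]
  refine Finset.prod_congr rfl fun i _ => ?_
  by_cases hi : i ∈ T
  · have h1 : ℙ (Z (Sum.inl i) ⁻¹' s' (Sum.inl i)) = 1 := by
      simp [s', hi]
    have h2 : ℙ (Z (Sum.inr i) ⁻¹' s' (Sum.inr i)) = Measure.map (Z (Sum.inl i)) ℙ (s i) := by
      have hss : s' (Sum.inr i) = s i := by simp [s', hi]
      rw [hss, ← Measure.map_apply (hmeas _) (hs i), ← (hident i).map_eq]
    rw [h1, h2, one_mul]
  · have h2 : ℙ (Z (Sum.inr i) ⁻¹' s' (Sum.inr i)) = 1 := by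
      simp [s', hi]
    have h1 : ℙ (Z (Sum.inl i) ⁻¹' s' (Sum.inl i)) = Measure.map (Z (Sum.inl i)) ℙ (s i) := by
      have hss : s' (Sum.inl i) = s i := by simp [s', hi]
      rw [hss, ← Measure.map_apply (hmeas _) (hs i)]
    rw [h1, h2, mul_one]

/-- Decoupling for maxima of non-negative symmetric kernels: if `X₁,…,Xₙ` are independent,
`X'₁,…,X'ₙ` is an independent copy (all `2n` variables jointly independent, with
`X'ᵢ ~ Xᵢ`), and `h` is symmetric and coordinatewise non-negative, then
`E[max_{m} max_{i≠j} h_m(Xᵢ, X'ⱼ)] ≤ 4 E[max_{m} max_{i≠j} h_m(Xᵢ, Xⱼ)]`. -/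
theorem stmt2 {Ω S : Type*} [MeasureSpace Ω] [IsProbabilityMeasure (ℙ : Measure Ω)]
    [MeasurableSpace S] {n d : ℕ} (hn : 2 ≤ n) (hd : 1 ≤ d)
    (Z : (Fin n ⊕ Fin n) → Ω → S) (hmeas : ∀ i, Measurable (Z i))
    (hindep : iIndepFun Z ℙ)
    (hident : ∀ i : Fin n, IdentDistrib (Z (.inl i)) (Z (.inr i)) ℙ ℙ)
    (h : S → S → Fin d → ℝ)
    (hsym : ∀ x₁ x₂, h x₁ x₂ = h x₂ x₁)
    (hnonneg : ∀ x₁ x₂ m, 0 ≤ h x₁ x₂ m)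
    (hmeash : ∀ m, Measurable (fun q : S × S => h q.1 q.2 m))
    (hintXX : Integrable (fun ω => ⨆ m : Fin d, ⨆ i : Fin n, ⨆ j : Fin n, ⨆ _ : i ≠ j,
        h (Z (.inl i) ω) (Z (.inl j) ω) m) ℙ)
    (hintXX' : Integrable (fun ω => ⨆ m : Fin d, ⨆ i : Fin n, ⨆ j : Fin n, ⨆ _ : i ≠ j,
        h (Z (.inl i) ω) (Z (.inr j) ω) m) ℙ) :
    (∫ ω, ⨆ m : Fin d, ⨆ i : Fin n, ⨆ j : Fin n, ⨆ _ : i ≠ j,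
        h (Z (.inl i) ω) (Z (.inr j) ω) m ∂ℙ)
      ≤ 4 * ∫ ω, ⨆ m : Fin d, ⨆ i : Fin n, ⨆ j : Fin n, ⨆ _ : i ≠ j,
        h (Z (.inl i) ω) (Z (.inl j) ω) m ∂ℙ := by
  classical
  set L : Ω → ℝ := fun ω => ⨆ m : Fin d, ⨆ i : Fin n, ⨆ j : Fin n, ⨆ _ : i ≠ j,
      h (Z (.inl i) ω) (Z (.inr j) ω) m with hL
  set R : Ω → ℝ := fun ω => ⨆ m : Fin d, ⨆ i : Fin n, ⨆ j : Fin n, ⨆ _ : i ≠ j,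
      h (Z (.inl i) ω) (Z (.inl j) ω) m with hR
  -- the swapped vectors
  set V : Finset (Fin n) → Ω → Fin n → S :=
    fun T ω i => Z (if i ∈ T then Sum.inr i else Sum.inl i) ω with hV
  have hVmeas : ∀ T, Measurable (V T) := fun T => measurable_pi_lambda _ fun i => hmeas _
  -- the max functional
  set G : (Fin n → S) → ℝ := fun x => ⨆ m : Fin d, ⨆ i : Fin n, ⨆ j : Fin n, ⨆ _ : i ≠ j,
      h (x i) (x j) m with hG
  have hGmeas : Measurable G := by
    refine Measurable.iSup fun m => Measurable.iSup fun i => Measurable.iSup fun j =>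
      Measurable.iSup_Prop _ ?_
    have : Measurable ((fun q : S × S => h q.1 q.2 m) ∘ fun x : Fin n → S => (x i, x j)) :=
      (hmeash m).comp ((measurable_pi_apply i).prodMk (measurable_pi_apply j))
    exact this
  have hGnonneg : ∀ x, 0 ≤ G x := fun x => aux_sup4_nonneg fun m i j => hnonneg _ _ _
  have hLnonneg : ∀ ω, 0 ≤ L ω := fun ω => aux_sup4_nonneg fun m i j => hnonneg _ _ _
  -- the decoupled partial maxima
  set D : Finset (Fin n) → Ω → ℝ := fun T ω => ⨆ m : Fin d, ⨆ i : Fin n, ⨆ j : Fin n,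
      ⨆ _ : i ∉ T ∧ j ∈ T, h (Z (.inl i) ω) (Z (.inr j) ω) m with hD
  have hDnonneg : ∀ T ω, 0 ≤ D T ω := fun T ω => aux_sup4_nonneg fun m i j => hnonneg _ _ _
  have hDmeas : ∀ T, Measurable (D T) := by
    intro T
    refine Measurable.iSup fun m => Measurable.iSup fun i => Measurable.iSup fun j =>
      Measurable.iSup_Prop _ ?_
    have : Measurable ((fun q : S × S => h q.1 q.2 m) ∘
        fun ω => (Z (Sum.inl i) ω, Z (Sum.inr j) ω)) :=
      (hmeash m).comp ((hmeas (Sum.inl i)).prodMk (hmeas (Sum.inr j)))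
    exact this
  have hDleL : ∀ T ω, D T ω ≤ L ω := by
    intro T ω
    simp only [hD]
    refine aux_sup4_le (hLnonneg ω) fun m i j hp => ?_
    simp only [hL]
    exact aux_le_sup4 (g := fun m i j => h (Z (Sum.inl i) ω) (Z (Sum.inr j) ω) m)
      (P := fun i j => i ≠ j) m i j (fun he => hp.1 (he ▸ hp.2))
  have hDint : ∀ T, Integrable (D T) ℙ := by
    intro T
    refine hintXX'.mono (hDmeas T).aestronglyMeasurable (ae_of_all _ fun ω => ?_)
    rw [Real.norm_eq_abs, Real.norm_eq_abs, abs_of_nonneg (hDnonneg T ω),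
      abs_of_nonneg (hLnonneg ω)]
    exact hDleL T ω
  have hDleG : ∀ T ω, D T ω ≤ G (V T ω) := by
    intro T ω
    simp only [hD]
    refine aux_sup4_le (hGnonneg _) fun m i j hp => ?_
    have hne : i ≠ j := fun he => hp.1 (he ▸ hp.2)
    have hvi : V T ω i = Z (.inl i) ω := by simp [hV, hp.1]
    have hvj : V T ω j = Z (.inr j) ω := by simp [hV, hp.2]
    rw [← hvi, ← hvj]
    simp only [hG]
    exact aux_le_sup4 (g := fun m i j => h (V T ω i) (V T ω j) m)
      (P := fun i j => i ≠ j) m i j hne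
  -- pointwise inequality
  have hpt : ∀ ω, (2:ℝ) ^ (n - 2) * L ω ≤ ∑ T : Finset (Fin n), D T ω := by
    intro ω
    have hSnonneg : (0:ℝ) ≤ ∑ T : Finset (Fin n), D T ω :=
      Finset.sum_nonneg fun T _ => hDnonneg T ω
    rw [mul_comm, ← le_div_iff₀ (by positivity)]
    simp only [hL]
    refine aux_sup4_le (by positivity) fun m i j hij => ?_
    rw [le_div_iff₀ (by positivity)]
    calc h (Z (.inl i) ω) (Z (.inr j) ω) m * 2 ^ (n - 2)
        = ∑ _T ∈ Finset.univ.filter (fun T : Finset (Fin n) => i ∉ T ∧ j ∈ T),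
            h (Z (.inl i) ω) (Z (.inr j) ω) m := by
          rw [Finset.sum_const, aux_card i j hij, nsmul_eq_mul, mul_comm]
          push_cast
          ring
      _ ≤ ∑ T ∈ Finset.univ.filter (fun T : Finset (Fin n) => i ∉ T ∧ j ∈ T), D T ω := by
          refine Finset.sum_le_sum fun T hT => ?_
          simp only [Finset.mem_filter] at hT
          simp only [hD]
          exact aux_le_sup4 (g := fun m i j => h (Z (Sum.inl i) ω) (Z (Sum.inr j) ω) m)
            (P := fun i j => i ∉ T ∧ j ∈ T) m i j hT.2
      _ ≤ ∑ T : Finset (Fin n), D T ω :=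
          Finset.sum_le_sum_of_subset_of_nonneg (Finset.filter_subset _ _)
            (fun T _ _ => hDnonneg T ω)
  -- identical distribution step
  have hmapT : ∀ T, Measure.map (V T) ℙ
      = Measure.pi (fun i => Measure.map (Z (Sum.inl i)) ℙ) :=
    fun T => aux_map_pi Z hmeas hindep hident T
  have hmap0 : Measure.map (fun ω (i : Fin n) => Z (Sum.inl i) ω) ℙ
      = Measure.pi (fun i => Measure.map (Z (Sum.inl i)) ℙ) := by
    have := hmapT ∅
    simpa [hV] using this
  have hstep : ∀ T : Finset (Fin n), ∫ ω, D T ω ∂ℙ ≤ ∫ ω, R ω ∂ℙ := by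
    intro T
    have hvec : IdentDistrib (V T) (fun ω (i : Fin n) => Z (Sum.inl i) ω) ℙ ℙ :=
      ⟨(hVmeas T).aemeasurable, (measurable_pi_lambda _ fun i => hmeas _).aemeasurable,
        by rw [hmapT T, hmap0]⟩
    have hidG : IdentDistrib (fun ω => G (V T ω)) R ℙ ℙ := hvec.comp hGmeas
    have hMTint : Integrable (fun ω => G (V T ω)) ℙ := hidG.integrable_iff.2 hintXX
    calc ∫ ω, D T ω ∂ℙ ≤ ∫ ω, G (V T ω) ∂ℙ :=
          integral_mono (hDint T) hMTint (fun ω => hDleG T ω)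
      _ = ∫ ω, R ω ∂ℙ := hidG.integral_eq
  -- assemble
  have key : (2:ℝ) ^ (n - 2) * ∫ ω, L ω ∂ℙ ≤ (2:ℝ) ^ (n - 2) * (4 * ∫ ω, R ω ∂ℙ) := by
    have hsum_int : Integrable (fun ω => ∑ T : Finset (Fin n), D T ω) ℙ :=
      integrable_finset_sum _ fun T _ => hDint T
    calc (2:ℝ) ^ (n - 2) * ∫ ω, L ω ∂ℙ = ∫ ω, (2:ℝ) ^ (n - 2) * L ω ∂ℙ :=
          (integral_const_mul _ _).symm
      _ ≤ ∫ ω, ∑ T : Finset (Fin n), D T ω ∂ℙ :=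
          integral_mono (hintXX'.const_mul _) hsum_int hpt
      _ = ∑ T : Finset (Fin n), ∫ ω, D T ω ∂ℙ := integral_finset_sum _ fun T _ => hDint T
      _ ≤ ∑ _T : Finset (Fin n), ∫ ω, R ω ∂ℙ := Finset.sum_le_sum fun T _ => hstep T
      _ = (2:ℝ) ^ n * ∫ ω, R ω ∂ℙ := by
          rw [Finset.sum_const, Finset.card_univ, Fintype.card_finset, Fintype.card_fin,
            nsmul_eq_mul]
          push_cast
          ring
      _ = (2:ℝ) ^ (n - 2) * (4 * ∫ ω, R ω ∂ℙ) := by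
          have hn' : n - 2 + 2 = n := Nat.sub_add_cancel hn
          rw [← mul_assoc]
          congr 1
          rw [show (4:ℝ) = 2 ^ 2 by norm_num, ← pow_add, hn']
  exact le_of_mul_le_mul_left key (by positivity)
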